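/- arXiv:1804.06187 — 2 statements merged into one kernel-verified Lean document; each statement's English description precedes it below -/
import Mathlib

section
/- Converse direction of the iterated-conditional characterization: if P(H) > 0, P(K) > 0, P(A∩H) > 0, and the iterated conditional satisfies ⟦(B|K)|(A|H)⟧(ω) = 1 for every ω ∈ Ω, then P(A|H) ≤ P(B|K). -/
open MeasureTheory Set
open scoped Classical

noncomputable section

variable {Ω : Type*} [MeasurableSpace Ω]

/-- Indicator (with values in `ℝ`) of a set. -/
def ind (A : Set Ω) : Ω → ℝ := A.indicator 1

/-- Conditional probability `P(A|H) = P(A ∩ H)/P(H)`. -/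
def condProb (P : Measure Ω) (A H : Set Ω) : ℝ :=
  (P (A ∩ H)).toReal / (P H).toReal

/-- The (indicator of the) conditional event `A|H`,
`⟦A|H⟧ = 1_{A∩H} + P(A|H)·1_{Hᶜ}`. -/
def condEvent (P : Measure Ω) (A H : Set Ω) : Ω → ℝ :=
  fun ω => ind (A ∩ H) ω + condProb P A H * ind Hᶜ ω

/-- The prevision `z` of the conjunction `(A|H) ∧ (B|K)`:
`z = E[min(⟦A|H⟧, ⟦B|K⟧)·1_{H∪K}]/P(H∪K)`. -/
def conjPrev (P : Measure Ω) (A H B K : Set Ω) : ℝ :=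
  (∫ ω, min (condEvent P A H ω) (condEvent P B K ω) * ind (H ∪ K) ω ∂P) /
    (P (H ∪ K)).toReal

/-- The conjunction `⟦(A|H) ∧ (B|K)⟧ = min(⟦A|H⟧, ⟦B|K⟧)·1_{H∪K} + z·1_{(H∪K)ᶜ}`. -/
def conjCE (P : Measure Ω) (A H B K : Set Ω) : Ω → ℝ :=
  fun ω => min (condEvent P A H ω) (condEvent P B K ω) * ind (H ∪ K) ω
    + conjPrev P A H B K * ind (H ∪ K)ᶜ ω

/-- The iterated conditional `⟦(B|K)|(A|H)⟧ = ⟦(A|H)∧(B|K)⟧ + μ·(1 − ⟦A|H⟧)`,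
with `μ = z / P(A|H)`. -/
def iterCond (P : Measure Ω) (A H B K : Set Ω) : Ω → ℝ :=
  fun ω => conjCE P A H B K ω +
    (conjPrev P A H B K / condProb P A H) * (1 - condEvent P A H ω)

/-- Goodman–Nguyen logical implication between conditional events:
`A|H ⊑ B|K` iff `A∩H ⊆ B∩K` and `Bᶜ∩K ⊆ Aᶜ∩H`. -/
def GNle (A H B K : Set Ω) : Prop := A ∩ H ⊆ B ∩ K ∧ Bᶜ ∩ K ⊆ Aᶜ ∩ H

omit [MeasurableSpace Ω] in
lemma ind_nonneg (S : Set Ω) (ω : Ω) : 0 ≤ ind S ω := by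
  by_cases h : ω ∈ S <;> simp [ind, Set.indicator, h]

omit [MeasurableSpace Ω] in
lemma ind_mul_ind (S T : Set Ω) (ω : Ω) : ind S ω * ind T ω = ind (S ∩ T) ω := by
  by_cases hS : ω ∈ S <;> by_cases hT : ω ∈ T <;>
    simp [ind, Set.indicator, hS, hT, Set.mem_inter_iff]

lemma integrable_ind (P : Measure Ω) [IsFiniteMeasure P] {S : Set Ω}
    (hS : MeasurableSet S) : Integrable (ind S) P :=
  (integrable_const (1 : ℝ)).indicator hS

lemma integral_ind (P : Measure Ω) [IsFiniteMeasure P] {S : Set Ω}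
    (hS : MeasurableSet S) : ∫ ω, ind S ω ∂P = (P S).toReal := by
  have h : ∫ ω, ind S ω ∂P = ∫ ω, S.indicator (fun _ => (1 : ℝ)) ω ∂P := rfl
  rw [h, integral_indicator_const (1 : ℝ) hS]; simp; rfl

omit [MeasurableSpace Ω] in
lemma mul_ind_eq_indicator (f : Ω → ℝ) (S : Set Ω) :
    (fun ω => f ω * ind S ω) = S.indicator f := by
  funext ω; by_cases h : ω ∈ S <;> simp [ind, Set.indicator, h]

lemma integrable_condEvent (P : Measure Ω) [IsFiniteMeasure P] {A H : Set Ω}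
    (hAm : MeasurableSet A) (hHm : MeasurableSet H) :
    Integrable (condEvent P A H) P := by
  unfold condEvent
  exact (integrable_ind P (hAm.inter hHm)).add
    ((integrable_ind P hHm.compl).const_mul _)

/-- Converse direction: if the iterated conditional `⟦(B|K)|(A|H)⟧` is
constantly `1`, then `P(A|H) ≤ P(B|K)`. -/
theorem le_of_iterCond_eq_one (P : Measure Ω) [IsProbabilityMeasure P]
    (A H B K : Set Ω)
    (hAm : MeasurableSet A) (hHm : MeasurableSet H)
    (hBm : MeasurableSet B) (hKm : MeasurableSet K)
    (hH : 0 < P H) (hK : 0 < P K) (hAH : 0 < P (A ∩ H))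
    (hiter : ∀ ω, iterCond P A H B K ω = 1) :
    condProb P A H ≤ condProb P B K := by
  set x := condEvent P A H with hxdef
  set y := condEvent P B K with hydef
  set p := condProb P A H with hpdef
  set q := condProb P B K with hqdef
  set z := conjPrev P A H B K with hzdef
  have hHne : (P H).toReal ≠ 0 := by
    have := ENNReal.toReal_pos hH.ne' (measure_ne_top P H); linarith
  have hKpos : 0 < (P K).toReal := ENNReal.toReal_pos hK.ne' (measure_ne_top P K)
  have hppos : 0 < p := by
    rw [hpdef, condProb]
    exact div_pos (ENNReal.toReal_pos hAH.ne' (measure_ne_top P _))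
      (ENNReal.toReal_pos hH.ne' (measure_ne_top P H))
  have hSm : MeasurableSet (H ∪ K) := hHm.union hKm
  have hmpos : 0 < (P (H ∪ K)).toReal := by
    refine ENNReal.toReal_pos (fun h0 => ?_) (measure_ne_top P _)
    exact (hH.trans_le (measure_mono Set.subset_union_left)).ne' h0
  set m := (P (H ∪ K)).toReal with hmdef
  -- integrability
  have hx : Integrable x P := integrable_condEvent P hAm hHm
  have hy : Integrable y P := integrable_condEvent P hBm hKm
  have hmin : Integrable (fun ω => min (x ω) (y ω)) P := by
    have h := hx.inf hy
    have : (x ⊓ y) = fun ω => min (x ω) (y ω) := by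
      funext ω; simp [Pi.inf_apply]
    rwa [this] at h
  have hminS : Integrable (fun ω => min (x ω) (y ω) * ind (H ∪ K) ω) P := by
    rw [mul_ind_eq_indicator]; exact hmin.indicator hSm
  -- the defining equation of z
  have hI1 : ∫ ω, min (x ω) (y ω) * ind (H ∪ K) ω ∂P = z * m := by
    rw [hzdef, conjPrev, ← hxdef, ← hydef, ← hmdef, div_mul_cancel₀]
    exact hmpos.ne'
  -- compl measure
  have hcompl : ∀ {S : Set Ω}, MeasurableSet S → (P Sᶜ).toReal = 1 - (P S).toReal := by
    intro S hS
    have : (P S).toReal + (P Sᶜ).toReal = 1 := by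
      rw [← ENNReal.toReal_add (measure_ne_top P S) (measure_ne_top P Sᶜ),
        measure_add_measure_compl hS, measure_univ, ENNReal.toReal_one]
    linarith
  -- ∫ x = p
  have hintx : ∫ ω, x ω ∂P = p := by
    have : ∫ ω, x ω ∂P =
        (∫ ω, ind (A ∩ H) ω ∂P) + p * ∫ ω, ind Hᶜ ω ∂P := by
      rw [hxdef]
      unfold condEvent
      rw [integral_add (integrable_ind P (hAm.inter hHm))
        ((integrable_ind P hHm.compl).const_mul _), integral_const_mul]
    rw [this, integral_ind P (hAm.inter hHm), integral_ind P hHm.compl,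
      hcompl hHm]
    have hpa : (P (A ∩ H)).toReal = p * (P H).toReal := by
      rw [hpdef, condProb, div_mul_cancel₀ _ hHne]
    rw [hpa]; ring
  -- ∫ conjCE = z
  have hintc : ∫ ω, conjCE P A H B K ω ∂P = z := by
    have : ∫ ω, conjCE P A H B K ω ∂P =
        (∫ ω, min (x ω) (y ω) * ind (H ∪ K) ω ∂P) + z * ∫ ω, ind (H ∪ K)ᶜ ω ∂P := by
      unfold conjCE
      rw [← hxdef, ← hydef, ← hzdef,
        integral_add hminS ((integrable_ind P hSm.compl).const_mul _),
        integral_const_mul]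
    rw [this, hI1, integral_ind P hSm.compl, hcompl hSm, ← hmdef]; ring
  -- integrate the hypothesis
  have hinteg : z + (z / p) * (1 - p) = 1 := by
    have h1 : ∫ ω, iterCond P A H B K ω ∂P = 1 := by
      have : (fun ω => iterCond P A H B K ω) = fun _ => (1 : ℝ) := funext hiter
      rw [this, integral_const, Measure.real, measure_univ, ENNReal.toReal_one, one_smul]
    have hcint : Integrable (conjCE P A H B K) P := by
      unfold conjCE
      rw [← hxdef, ← hydef, ← hzdef]
      exact hminS.add ((integrable_ind P hSm.compl).const_mul _)
    have h1x : Integrable (fun ω => 1 - x ω) P := by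
      have := (integrable_const (1 : ℝ)).sub hx
      exact this
    have h2 : ∫ ω, iterCond P A H B K ω ∂P =
        (∫ ω, conjCE P A H B K ω ∂P) + (z / p) * ∫ ω, (1 - x ω) ∂P := by
      unfold iterCond
      rw [← hxdef, ← hpdef, ← hzdef,
        integral_add hcint (h1x.const_mul _), integral_const_mul]
    have h3 : ∫ ω, (1 - x ω) ∂P = 1 - p := by
      rw [integral_sub (integrable_const (1:ℝ)) hx, hintx, integral_const,
        Measure.real, measure_univ, ENNReal.toReal_one, one_smul]
    rw [h2, hintc, h3] at h1
    exact h1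
  have hzp : z = p := by
    have h := hinteg
    field_simp at h
    -- h : z * p + z * (1 - p) = p  (roughly); solve
    nlinarith [h]
  -- z ≤ q
  have hzq : z ≤ q := by
    have hyS : Integrable (fun ω => y ω * ind (H ∪ K) ω) P := by
      rw [mul_ind_eq_indicator]; exact hy.indicator hSm
    have hmono : ∫ ω, min (x ω) (y ω) * ind (H ∪ K) ω ∂P ≤
        ∫ ω, y ω * ind (H ∪ K) ω ∂P := by
      refine integral_mono hminS hyS fun ω => ?_
      exact mul_le_mul_of_nonneg_right (min_le_right _ _) (ind_nonneg _ ω)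
    have hyval : ∫ ω, y ω * ind (H ∪ K) ω ∂P = q * m := by
      have hrw : (fun ω => y ω * ind (H ∪ K) ω) =
          fun ω => ind (B ∩ K) ω + q * ind (Kᶜ ∩ (H ∪ K)) ω := by
        funext ω
        rw [hydef]
        unfold condEvent
        rw [← hqdef, add_mul, mul_assoc, ind_mul_ind, ind_mul_ind]
        congr 2
        ext t; constructor
        · rintro ⟨⟨htB, htK⟩, -⟩; exact ⟨htB, htK⟩
        · rintro ⟨htB, htK⟩; exact ⟨⟨htB, htK⟩, Or.inr htK⟩
      rw [hrw, integral_add (integrable_ind P (hBm.inter hKm))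
        ((integrable_ind P (hKm.compl.inter hSm)).const_mul _),
        integral_const_mul, integral_ind P (hBm.inter hKm),
        integral_ind P (hKm.compl.inter hSm)]
      have hqb : (P (B ∩ K)).toReal = q * (P K).toReal := by
        rw [hqdef, condProb, div_mul_cancel₀ _ hKpos.ne']
      have hsplit : (P K).toReal + (P (Kᶜ ∩ (H ∪ K))).toReal = m := by
        rw [hmdef, ← ENNReal.toReal_add (measure_ne_top P _) (measure_ne_top P _)]
        congr 1
        rw [← measure_union (by
            exact Disjoint.mono_right Set.inter_subset_left disjoint_compl_right)
          (hKm.compl.inter hSm)]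
        congr 1
        ext t
        constructor
        · rintro (h | ⟨-, h⟩)
          · exact Or.inr h
          · exact h
        · intro h
          by_cases htK : t ∈ K
          · exact Or.inl htK
          · exact Or.inr ⟨htK, h⟩
      linear_combination hqb + q * hsplit
    have : z * m ≤ q * m := by rw [← hI1, ← hyval]; exact hmono
    exact le_of_mul_le_mul_right this hmpos
  exact hzp ▸ hzq


end
end

section
/- Key lemma for the Or rule: for events A, B, C with P(A) > 0 and P(B) > 0, the triple conjunction satisfies T3(ω) = ⟦(C|A)∧(C|B)⟧(ω) for every ω ∈ Ω; in particular t equals the prevision z of ⟦(C|A)∧(C|B)⟧. -/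
open MeasureTheory Set
open scoped Classical

noncomputable section

variable {Ω : Type*} [MeasurableSpace Ω]

/-- Or rule: `min(⟦C|(A∪B)⟧, ⟦C|A⟧, ⟦C|B⟧)`. -/
def orMin (P : Measure Ω) (A B C : Set Ω) : Ω → ℝ :=
  fun ω => min (condEvent P C (A ∪ B) ω) (min (condEvent P C A ω) (condEvent P C B ω))

/-- Or rule: the prevision `t = E[min(⟦C|(A∪B)⟧, ⟦C|A⟧, ⟦C|B⟧)·1_{A∪B}]/P(A∪B)`
of the triple conjunction. -/
def orPrev (P : Measure Ω) (A B C : Set Ω) : ℝ :=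
  (∫ ω, orMin P A B C ω * ind (A ∪ B) ω ∂P) / (P (A ∪ B)).toReal

/-- Or rule: the triple conjunction
`T3 = ⟦(C|(A∪B))∧(C|A)∧(C|B)⟧ = min(⟦C|(A∪B)⟧, ⟦C|A⟧, ⟦C|B⟧)·1_{A∪B} + t·1_{(A∪B)ᶜ}`. -/
def orT3 (P : Measure Ω) (A B C : Set Ω) : Ω → ℝ :=
  fun ω => orMin P A B C ω * ind (A ∪ B) ω + orPrev P A B C * ind (A ∪ B)ᶜ ω

/-- Or rule: the iterated conditional
`⟦(C|(A∪B))|((C|A)∧(C|B))⟧ = T3 + (t/z)·(1 − C2)` where `C2 = ⟦(C|A)∧(C|B)⟧`. -/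
def orIter (P : Measure Ω) (A B C : Set Ω) : Ω → ℝ :=
  fun ω => orT3 P A B C ω +
    (orPrev P A B C / conjPrev P C A C B) * (1 - conjCE P C A C B ω)

lemma ind_mem {S : Set Ω} {ω : Ω} (h : ω ∈ S) : ind S ω = 1 := by
  simp [ind, Set.indicator_of_mem h]

lemma ind_not_mem {S : Set Ω} {ω : Ω} (h : ω ∉ S) : ind S ω = 0 := by
  simp [ind, Set.indicator_of_notMem h]

lemma condProb_nonneg (P : Measure Ω) (A H : Set Ω) : 0 ≤ condProb P A H :=
  div_nonneg ENNReal.toReal_nonneg ENNReal.toReal_nonneg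

lemma condProb_le_one (P : Measure Ω) [IsProbabilityMeasure P] (A H : Set Ω) :
    condProb P A H ≤ 1 := by
  unfold condProb
  rcases eq_or_ne (P H) 0 with h | h
  · have : P (A ∩ H) = 0 :=
      le_antisymm (h ▸ measure_mono inter_subset_right) zero_le
    simp [this]
  · apply div_le_one_of_le₀
    · exact ENNReal.toReal_mono (measure_ne_top P H) (measure_mono inter_subset_right)
    · exact ENNReal.toReal_nonneg

lemma condEvent_nonneg (P : Measure Ω) (A H : Set Ω) (ω : Ω) :
    0 ≤ condEvent P A H ω := by
  unfold condEvent
  have h1 : (0:ℝ) ≤ ind (A ∩ H) ω := Set.indicator_nonneg (fun _ _ => zero_le_one) ω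
  have h2 : (0:ℝ) ≤ ind Hᶜ ω := Set.indicator_nonneg (fun _ _ => zero_le_one) ω
  have h3 := condProb_nonneg P A H
  positivity

lemma condEvent_le_one (P : Measure Ω) [IsProbabilityMeasure P] (A H : Set Ω) (ω : Ω) :
    condEvent P A H ω ≤ 1 := by
  unfold condEvent
  by_cases h : ω ∈ H
  · rw [ind_not_mem (S := Hᶜ) (not_not_intro h)]
    by_cases hA : ω ∈ A ∩ H
    · rw [ind_mem hA]; linarith
    · rw [ind_not_mem hA]; linarith
  · rw [ind_not_mem (S := A ∩ H) (fun hx => h hx.2), ind_mem (S := Hᶜ) h]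
    have := condProb_le_one P A H
    linarith

lemma orMin_eq (P : Measure Ω) [IsProbabilityMeasure P] (A B C : Set Ω) (ω : Ω) :
    orMin P A B C ω * ind (A ∪ B) ω =
      min (condEvent P C A ω) (condEvent P C B ω) * ind (A ∪ B) ω := by
  by_cases hU : ω ∈ A ∪ B
  · rw [ind_mem (S := A ∪ B) hU]
    unfold orMin
    have hUc : ω ∉ (A ∪ B)ᶜ := not_not_intro hU
    by_cases hC : ω ∈ C
    · have h1 : condEvent P C (A ∪ B) ω = 1 := by
        unfold condEvent
        rw [ind_mem (S := C ∩ (A ∪ B)) ⟨hC, hU⟩, ind_not_mem hUc]; ring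
      rw [h1, mul_one, mul_one]
      exact min_eq_right ((min_le_left _ _).trans (condEvent_le_one P C A ω))
    · have h0 : condEvent P C (A ∪ B) ω = 0 := by
        unfold condEvent
        rw [ind_not_mem (S := C ∩ (A ∪ B)) (fun hx => hC hx.1), ind_not_mem hUc]; ring
      have hmin : min (condEvent P C A ω) (condEvent P C B ω) = 0 := by
        rcases hU with hA | hB
        · have : condEvent P C A ω = 0 := by
            unfold condEvent
            rw [ind_not_mem (S := C ∩ A) (fun hx => hC hx.1),
              ind_not_mem (S := Aᶜ) (not_not_intro hA)]; ring
          rw [min_eq_left (this ▸ condEvent_nonneg P C B ω), this]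
        · have : condEvent P C B ω = 0 := by
            unfold condEvent
            rw [ind_not_mem (S := C ∩ B) (fun hx => hC hx.1),
              ind_not_mem (S := Bᶜ) (not_not_intro hB)]; ring
          rw [min_eq_right (this ▸ condEvent_nonneg P C A ω), this]
      rw [h0, hmin, min_self]
  · rw [ind_not_mem hU, mul_zero, mul_zero]

lemma orPrev_eq (P : Measure Ω) [IsProbabilityMeasure P] (A B C : Set Ω) :
    orPrev P A B C = conjPrev P C A C B := by
  unfold orPrev conjPrev
  congr 1
  exact integral_congr_ae (Filter.Eventually.of_forall (orMin_eq P A B C))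

/-- Key lemma for the Or rule: the triple conjunction
`T3 = ⟦(C|(A∪B))∧(C|A)∧(C|B)⟧` coincides pointwise with the conjunction
`⟦(C|A)∧(C|B)⟧`; in particular `t = z`. -/
theorem or_rule_key_lemma (P : Measure Ω) [IsProbabilityMeasure P]
    (A B C : Set Ω)
    (hAm : MeasurableSet A) (hBm : MeasurableSet B) (hCm : MeasurableSet C)
    (hA : 0 < P A) (hB : 0 < P B) :
    (∀ ω, orT3 P A B C ω = conjCE P C A C B ω) ∧
      orPrev P A B C = conjPrev P C A C B := by
  refine ⟨fun ω => ?_, orPrev_eq P A B C⟩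
  unfold orT3 conjCE
  rw [orMin_eq P A B C ω, orPrev_eq P A B C]

end
end
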